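/- The maximal cheating probability g_m for the m-round F_Q protocol is non-decreasing in m: g_m ≤ g_{m+1} for all m ≥ 2. (Given any strategy for m rounds, appending a final round in which Alice outputs y_{m+1} = 0 after having output y_m at round m, together with shifting so that the old final answer is committed via the new round, yields a strategy for m+1 rounds winning at least as often.) -/

import Mathlib

open Finset

/-- Embed the inputs x₁,…,xₙ (given as a vector) into a function ℕ → F (0 elsewhere). -/
def extendVec {F : Type*} [Field F] (n : ℕ) (v : Fin n → F) : ℕ → F :=
  fun i => if h : 1 ≤ i ∧ i ≤ n then v ⟨i - 1, by omega⟩ else 0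

/-- The recursively rolled-up check value: α₀ = d, αᵢ = yᵢ − xᵢ·αᵢ₋₁. -/
def alphaRec {F : Type*} [Field F] (d : F) (x y : ℕ → F) : ℕ → F
  | 0 => d
  | i + 1 => y (i + 1) - x (i + 1) * alphaRec d x y i

/-- The committed bit viewed as a field element. -/
def bitF (F : Type*) [Field F] (d : Bool) : F := if d then 1 else 0

/-- A valid (relativistic) cheating strategy: the round-1 answer depends only on x₁, and the
round-i answer depends only on d, x₁,…,x_{i−2} and xᵢ. -/
def ValidStrategy {F : Type*} [Field F] (S : ℕ → F → (ℕ → F) → F) : Prop :=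
  (∀ d d' x, S 1 d x = S 1 d' x) ∧
  (∀ i d x x', (∀ j, j + 2 ≤ i → x j = x' j) → x i = x' i → S i d x = S i d x')

/-- Winning condition of the m-round protocol P_m: y_m = α_{m−1}. -/
def winP {F : Type*} [Field F] (m : ℕ) (S : ℕ → F → (ℕ → F) → F)
    (d : Bool) (v : Fin (m - 1) → F) : Prop :=
  let x := extendVec (m - 1) v
  let y := fun i => S i (bitF F d) x
  y m = alphaRec (bitF F d) x y (m - 1)

/-- Winning condition of the symmetrized m-round protocol P'_m: y_m = x_m·α_{m−1}. -/
def winP' {F : Type*} [Field F] (m : ℕ) (S : ℕ → F → (ℕ → F) → F)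
    (d : Bool) (v : Fin m → F) : Prop :=
  let x := extendVec m v
  let y := fun i => S i (bitF F d) x
  y m = x m * alphaRec (bitF F d) x y (m - 1)

open scoped Classical in
/-- Winning probability of a strategy in P_m, for uniform d and x₁,…,x_{m−1}. -/
noncomputable def probP (F : Type*) [Field F] [Fintype F] [DecidableEq F]
    (m : ℕ) (S : ℕ → F → (ℕ → F) → F) : ℝ :=
  ((Finset.univ.filter (fun p : Bool × (Fin (m - 1) → F) => winP m S p.1 p.2)).card : ℝ) /
    (Fintype.card (Bool × (Fin (m - 1) → F)) : ℝ)

open scoped Classical in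
/-- Winning probability of a strategy in P'_m, for uniform d and x₁,…,x_m. -/
noncomputable def probP' (F : Type*) [Field F] [Fintype F] [DecidableEq F]
    (m : ℕ) (S : ℕ → F → (ℕ → F) → F) : ℝ :=
  ((Finset.univ.filter (fun p : Bool × (Fin m → F) => winP' m S p.1 p.2)).card : ℝ) /
    (Fintype.card (Bool × (Fin m → F)) : ℝ)

/-- g_m: Alice's maximal cheating probability in P_m. -/
noncomputable def gP (F : Type*) [Field F] [Fintype F] [DecidableEq F] (m : ℕ) : ℝ :=
  sSup {p : ℝ | ∃ S, ValidStrategy S ∧ p = probP F m S}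

/-- g'_m: Alice's maximal cheating probability in P'_m. -/
noncomputable def gP' (F : Type*) [Field F] [Fintype F] [DecidableEq F] (m : ℕ) : ℝ :=
  sSup {p : ℝ | ∃ S, ValidStrategy S ∧ p = probP' F m S}

section AuxGPMono

variable {F : Type*} [Field F]

lemma alphaRec_congr (d : F) {x x' y y' : ℕ → F} {n : ℕ}
    (hx : ∀ j, 1 ≤ j → j ≤ n → x j = x' j)
    (hy : ∀ j, 1 ≤ j → j ≤ n → y j = y' j) :
    ∀ i, i ≤ n → alphaRec d x y i = alphaRec d x' y' i := by
  intro i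
  induction i with
  | zero => intro _; rfl
  | succ i ih =>
    intro h
    simp only [alphaRec]
    rw [ih (by omega), hx _ (by omega) h, hy _ (by omega) h]

/-- Lift an m-round strategy to an (m+1)-round strategy:
round m answers x_m times the old round-m answer, round m+1 answers 0. -/
def liftStrat (m : ℕ) (S : ℕ → F → (ℕ → F) → F) : ℕ → F → (ℕ → F) → F :=
  fun i d x => if i < m then S i d x
    else if i = m then x m * S m d (fun j => if j = m then 0 else x j) else 0

lemma liftStrat_valid {m : ℕ} (hm : 2 ≤ m) {S : ℕ → F → (ℕ → F) → F}
    (hS : ValidStrategy S) : ValidStrategy (liftStrat m S) := by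
  constructor
  · intro d d' x
    simp only [liftStrat, if_pos (by omega : 1 < m)]
    exact hS.1 d d' x
  · intro i d x x' hj hi
    unfold liftStrat
    split_ifs with h1 h2
    · exact hS.2 i d x x' hj hi
    · subst h2
      rw [hi]
      congr 1
      refine hS.2 i d _ _ (fun j hji => ?_) (by simp)
      have hjne : j ≠ i := by omega
      simp only [if_neg hjne]
      exact hj j hji
    · rfl

/-- Append a last coordinate to a vector. -/
def snocVec {F : Type*} [Field F] (k : ℕ) (v : Fin (k + 1) → F) (w : F) :
    Fin (k + 2) → F :=
  fun j => if h : (j : ℕ) < k + 1 then v ⟨j, h⟩ else w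

lemma extendVec_snoc (k : ℕ) (v : Fin (k + 1) → F) (w : F) :
    ∀ j, j ≠ k + 2 → extendVec (k + 2) (snocVec k v w) j = extendVec (k + 1) v j := by
  intro j hj
  unfold extendVec snocVec
  by_cases h : 1 ≤ j ∧ j ≤ k + 1
  · rw [dif_pos (show 1 ≤ j ∧ j ≤ k + 2 by omega), dif_pos h]
    simp only [Fin.val_mk]
    rw [dif_pos (show j - 1 < k + 1 by omega)]
  · rw [dif_neg (by omega), dif_neg h]

lemma extendVec_snoc_last (k : ℕ) (v : Fin (k + 1) → F) (w : F) :
    extendVec (k + 2) (snocVec k v w) (k + 2) = w := by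
  unfold extendVec snocVec
  rw [dif_pos (show 1 ≤ k + 2 ∧ k + 2 ≤ k + 2 by omega)]
  simp only [Fin.val_mk]
  rw [dif_neg (show ¬ (k + 2 - 1 < k + 1) by omega)]

lemma extendVec_last_zero (k : ℕ) (v : Fin (k + 1) → F) :
    extendVec (k + 1) v (k + 2) = 0 := by
  unfold extendVec
  rw [dif_neg (by omega)]

lemma snocVec_inj {k : ℕ} {v v' : Fin (k + 1) → F} {w w' : F}
    (h : snocVec k v w = snocVec k v' w') : v = v' ∧ w = w' := by
  constructor
  · funext j
    have := congrFun h ⟨(j : ℕ), by omega⟩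
    simpa [snocVec, j.isLt] using this
  · have := congrFun h ⟨k + 1, by omega⟩
    simpa [snocVec] using this

lemma lift_winP {k : ℕ} {S : ℕ → F → (ℕ → F) → F} (hS : ValidStrategy S)
    (d : Bool) (v : Fin (k + 1) → F) (w : F)
    (hwin : winP (k + 2) S d v) :
    winP (k + 3) (liftStrat (k + 2) S) d (snocVec k v w) := by
  set e : F := bitF F d with he
  set x' : ℕ → F := extendVec (k + 1) v with hx'
  set x : ℕ → F := extendVec (k + 2) (snocVec k v w) with hx
  set y' : ℕ → F := fun i => S i e x' with hy'
  set y : ℕ → F := fun i => liftStrat (k + 2) S i e x with hy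
  have hxx' : ∀ j, j ≠ k + 2 → x j = x' j := extendVec_snoc k v w
  have hxw : x (k + 2) = w := extendVec_snoc_last k v w
  -- the masked x equals x'
  have hmask : (fun j => if j = k + 2 then (0 : F) else x j) = x' := by
    funext j
    by_cases hj : j = k + 2
    · rw [if_pos hj, hj, hx']
      unfold extendVec
      rw [dif_neg (by omega)]
    · simp only [if_neg hj]
      exact hxx' j hj
  -- S agrees on x and x' for small rounds
  have hSagree : ∀ i, i ≤ k + 1 → S i e x = S i e x' := by
    intro i hi
    refine hS.2 i e x x' (fun j hji => hxx' j (by omega)) (hxx' i (by omega))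
  have hyy' : ∀ i, 1 ≤ i → i ≤ k + 1 → y i = y' i := by
    intro i _ hi
    simp only [hy, hy', liftStrat, if_pos (by omega : i < k + 2)]
    exact hSagree i hi
  have halpha : alphaRec e x y (k + 1) = alphaRec e x' y' (k + 1) :=
    alphaRec_congr e (fun j h1 h2 => hxx' j (by omega)) hyy' (k + 1) le_rfl
  -- value of y at round k+2
  have hym : y (k + 2) = w * y' (k + 2) := by
    simp only [hy, hy', liftStrat]
    rw [if_neg (show ¬ (k + 2 < k + 2) by omega)]
    simp only [if_true]
    rw [hxw, hmask]
  -- the old winning condition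
  have hwin' : y' (k + 2) = alphaRec e x' y' (k + 1) := hwin
  -- conclude
  show y (k + 3) = alphaRec e x y (k + 2)
  have hlast : y (k + 3) = 0 := by
    simp only [hy, liftStrat]
    rw [if_neg (by omega), if_neg (by omega)]
  rw [hlast]
  show (0 : F) = y (k + 2) - x (k + 2) * alphaRec e x y (k + 1)
  rw [hym, hxw, halpha, hwin']
  ring

end AuxGPMono

section ProbAux

variable (F : Type*) [Field F] [Fintype F] [DecidableEq F]

lemma probP_nonneg (m : ℕ) (S : ℕ → F → (ℕ → F) → F) : 0 ≤ probP F m S := by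
  unfold probP
  positivity

lemma probP_le_one (m : ℕ) (S : ℕ → F → (ℕ → F) → F) : probP F m S ≤ 1 := by
  classical
  unfold probP
  rw [div_le_one (by positivity)]
  exact_mod_cast Finset.card_filter_le _ _

open scoped Classical in
lemma probP_lift (k : ℕ) {S : ℕ → F → (ℕ → F) → F} (hS : ValidStrategy S) :
    probP F (k + 2) S ≤ probP F (k + 3) (liftStrat (k + 2) S) := by
  classical
  have hQ : (0:ℝ) < (Fintype.card F : ℝ) := by exact_mod_cast Fintype.card_pos
  set A : Finset (Bool × (Fin (k + 1) → F)) :=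
    Finset.univ.filter (fun p : Bool × (Fin (k + 1) → F) => winP (k + 2) S p.1 p.2) with hA
  set B : Finset (Bool × (Fin (k + 2) → F)) :=
    Finset.univ.filter
      (fun p : Bool × (Fin (k + 2) → F) => winP (k + 3) (liftStrat (k + 2) S) p.1 p.2) with hB
  have hcard : A.card * Fintype.card F ≤ B.card := by
    have key := Finset.card_le_card_of_injOn
      (f := fun q : (Bool × (Fin (k + 1) → F)) × F => (q.1.1, snocVec k q.1.2 q.2))
      (s := A ×ˢ (Finset.univ : Finset F)) (t := B)
      (by
        rintro ⟨⟨d, v⟩, w⟩ hq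
        rw [Finset.mem_coe, Finset.mem_product] at hq
        rw [hA, Finset.mem_filter] at hq
        rw [Finset.mem_coe, hB, Finset.mem_filter]
        exact ⟨Finset.mem_univ _, lift_winP hS d v w hq.1.2⟩)
      (by
        rintro ⟨⟨d, v⟩, w⟩ _ ⟨⟨d', v'⟩, w'⟩ _ h
        simp only [Prod.mk.injEq] at h
        obtain ⟨hvv, hww⟩ := snocVec_inj h.2
        simp [h.1, hvv, hww])
    rwa [Finset.card_product, Finset.card_univ] at key
  have hB1 : (Fintype.card (Bool × (Fin (k + 2) → F)) : ℝ)
      = (Fintype.card (Bool × (Fin (k + 1) → F)) : ℝ) * (Fintype.card F : ℝ) := by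
    simp only [Fintype.card_prod, Fintype.card_fun, Fintype.card_fin, Fintype.card_bool]
    push_cast
    ring
  have hN : (0:ℝ) < (Fintype.card (Bool × (Fin (k + 1) → F)) : ℝ) := by
    exact_mod_cast Fintype.card_pos
  show (A.card : ℝ) / (Fintype.card (Bool × (Fin (k + 1) → F)) : ℝ)
      ≤ (B.card : ℝ) / (Fintype.card (Bool × (Fin (k + 2) → F)) : ℝ)
  rw [hB1, div_le_div_iff₀ hN (by positivity)]
  have hcast : (A.card : ℝ) * (Fintype.card F : ℝ) ≤ (B.card : ℝ) := by
    exact_mod_cast hcard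
  nlinarith [hN.le, hcast, hQ.le]

end ProbAux

/-- the maximal cheating probability g_m is non-decreasing: g_m ≤ g_{m+1}
for all m ≥ 2. -/
theorem gP_mono (F : Type*) [Field F] [Fintype F] [DecidableEq F]
    (m : ℕ) (hm : 2 ≤ m) : gP F m ≤ gP F (m + 1) := by
  classical
  obtain ⟨k, rfl⟩ : ∃ k, m = k + 2 := ⟨m - 2, by omega⟩
  have hbdd : BddAbove {p : ℝ | ∃ S, ValidStrategy S ∧ p = probP F (k + 3) S} := by
    refine ⟨1, ?_⟩
    rintro p ⟨S, _, rfl⟩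
    exact probP_le_one F (k + 3) S
  have hzero_valid : ValidStrategy (fun (_ : ℕ) (_ : F) (_ : ℕ → F) => (0 : F)) :=
    ⟨fun _ _ _ => rfl, fun _ _ _ _ _ _ => rfl⟩
  have hsup_nonneg : 0 ≤ gP F (k + 3) := by
    refine le_trans (probP_nonneg F (k + 3) (fun _ _ _ => 0)) ?_
    exact le_csSup hbdd ⟨_, hzero_valid, rfl⟩
  refine Real.sSup_le ?_ hsup_nonneg
  rintro p ⟨S, hS, rfl⟩
  refine le_trans (probP_lift F k hS) ?_
  exact le_csSup hbdd ⟨liftStrat (k + 2) S, liftStrat_valid (by omega) hS, rfl⟩
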